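/- Let ρ(x) = √(x² + δ²) with δ > 0 and ρ'(x) = x / √(x² + δ²). Then ρ' is cocoercive with parameter δ: for all x₁, x₂ ∈ ℝ, (ρ'(x₁) − ρ'(x₂))² ≤ δ⁻¹ (x₁ − x₂)(ρ'(x₁) − ρ'(x₂)). -/

import Mathlib

theorem pseudoHuber_deriv_cocoercive (δ : ℝ) (hδ : 0 < δ) (x₁ x₂ : ℝ) :
    (x₁ / Real.sqrt (x₁ ^ 2 + δ ^ 2) - x₂ / Real.sqrt (x₂ ^ 2 + δ ^ 2)) ^ 2 ≤
      δ⁻¹ * ((x₁ - x₂) * (x₁ / Real.sqrt (x₁ ^ 2 + δ ^ 2) - x₂ / Real.sqrt (x₂ ^ 2 + δ ^ 2))) := by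
  set f : ℝ → ℝ := fun y => y / Real.sqrt (y ^ 2 + δ ^ 2) with hf
  have hderiv : ∀ x : ℝ, HasDerivAt f (δ^2 / ((x^2 + δ^2) * Real.sqrt (x^2 + δ^2))) x := by
    intro x
    have hpos : (0:ℝ) < x^2 + δ^2 := by positivity
    have hsq : Real.sqrt (x^2 + δ^2) ^ 2 = x^2 + δ^2 := Real.sq_sqrt hpos.le
    have hs : 0 < Real.sqrt (x^2 + δ^2) := Real.sqrt_pos.2 hpos
    have h1 : HasDerivAt (fun y : ℝ => y^2 + δ^2) (2*x) x := by
      simpa using ((hasDerivAt_pow 2 x).add_const (δ^2))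
    have h2 : HasDerivAt (fun y : ℝ => Real.sqrt (y^2 + δ^2)) (x / Real.sqrt (x^2 + δ^2)) x := by
      have := (Real.hasDerivAt_sqrt hpos.ne').comp x h1
      refine this.congr_deriv ?_
      field_simp
    have h3 := (hasDerivAt_id x).div h2 hs.ne'
    refine h3.congr_deriv ?_
    rw [Real.sq_sqrt hpos.le]
    field_simp
    simp only [id_eq]
    nlinarith [hsq, hs]
  have hbound : ∀ x : ℝ, δ^2 / ((x^2 + δ^2) * Real.sqrt (x^2 + δ^2)) ≤ δ⁻¹ := by
    intro x
    have hpos : (0:ℝ) < x^2 + δ^2 := by positivity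
    have hs : δ ≤ Real.sqrt (x^2 + δ^2) := by
      have := Real.sqrt_le_sqrt (show δ^2 ≤ x^2 + δ^2 by nlinarith [sq_nonneg x])
      rwa [Real.sqrt_sq hδ.le] at this
    have h1 : δ^2 * δ ≤ (x^2 + δ^2) * Real.sqrt (x^2 + δ^2) := by
      apply mul_le_mul (by nlinarith) hs hδ.le hpos.le
    rw [div_le_iff₀ (by positivity)]
    rw [inv_mul_eq_div, le_div_iff₀ hδ]
    nlinarith
  have hpos' : ∀ x : ℝ, 0 < δ^2 / ((x^2 + δ^2) * Real.sqrt (x^2 + δ^2)) := by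
    intro x
    have hpos : (0:ℝ) < x^2 + δ^2 := by positivity
    positivity
  -- monotone
  have hmono : Monotone f := by
    apply StrictMono.monotone
    apply strictMono_of_deriv_pos
    intro x
    rw [(hderiv x).deriv]
    exact hpos' x
  -- Lipschitz
  have hlip : ∀ a b : ℝ, |f b - f a| ≤ δ⁻¹ * |b - a| := by
    intro a b
    have := Convex.norm_image_sub_le_of_norm_hasDerivWithin_le
      (f' := fun x => δ^2 / ((x^2 + δ^2) * Real.sqrt (x^2 + δ^2)))
      (fun x _ => (hderiv x).hasDerivWithinAt)
      (fun x _ => by rw [Real.norm_eq_abs, abs_of_pos (hpos' x)]; exact hbound x)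
      convex_univ (Set.mem_univ a) (Set.mem_univ b)
    simpa [Real.norm_eq_abs] using this
  -- combine
  have h1 : 0 ≤ (x₁ - x₂) * (f x₁ - f x₂) := by
    rcases le_total x₂ x₁ with h | h
    · exact mul_nonneg (by linarith) (by linarith [hmono h])
    · have := hmono h
      nlinarith
  have h2 : |f x₁ - f x₂| ≤ δ⁻¹ * |x₁ - x₂| := hlip x₂ x₁
  have key : (f x₁ - f x₂)^2 ≤ δ⁻¹ * ((x₁ - x₂) * (f x₁ - f x₂)) := by
    have h3 : (f x₁ - f x₂)^2 = |f x₁ - f x₂| * |f x₁ - f x₂| := by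
      rw [← abs_mul, abs_of_nonneg (mul_self_nonneg _), sq]
    have h4 : |x₁ - x₂| * |f x₁ - f x₂| = (x₁ - x₂) * (f x₁ - f x₂) := by
      rw [← abs_mul, abs_of_nonneg h1]
    calc (f x₁ - f x₂)^2 = |f x₁ - f x₂| * |f x₁ - f x₂| := h3
      _ ≤ (δ⁻¹ * |x₁ - x₂|) * |f x₁ - f x₂| := by
          apply mul_le_mul_of_nonneg_right h2 (abs_nonneg _)
      _ = δ⁻¹ * ((x₁ - x₂) * (f x₁ - f x₂)) := by rw [mul_assoc, h4]
  simpa [hf] using key
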